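/- Let $w_0$ denote the longest element of $S_n$, acting on $F(x_1,\ldots,x_n)$ by $x_i \mapsto x_{n+1-i}$. With $H_i$ and $H_i^\circ$ the Demazure–Lusztig operators at parameters $t$ and $t^{-1}$ respectively, one has $w_0 H_i w_0 = (H_{n-i}^\circ)^{-1}$ for $1\leq i < n$. -/

import Mathlib

open MvPolynomial
set_option maxHeartbeats 1600000
set_option synthInstance.maxHeartbeats 400000

/-- The Demazure–Lusztig operator with parameter `t`:
`H f = t·(s f) - ((1-t)x_i/(x_i - x_{i'}))·(f - s f)` on `F(x_1,…,x_n)`,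
where `s` is the field homomorphism interchanging `x_i` and `x_{i'}`.
The operator `H_i°` (parameter `t` replaced by `t⁻¹`) is `DLop t⁻¹ i i' s`. -/
noncomputable def DLop {F : Type} [Field F] {n : ℕ} (t : F) (i i' : Fin n)
    (s : FractionRing (MvPolynomial (Fin n) F) →+*
         FractionRing (MvPolynomial (Fin n) F))
    (f : FractionRing (MvPolynomial (Fin n) F)) :
    FractionRing (MvPolynomial (Fin n) F) :=
  algebraMap (MvPolynomial (Fin n) F) _ (C t) * s f -
    ((1 - algebraMap (MvPolynomial (Fin n) F) _ (C t)) *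
        algebraMap (MvPolynomial (Fin n) F) _ (X i) /
      (algebraMap (MvPolynomial (Fin n) F) _ (X i) -
        algebraMap (MvPolynomial (Fin n) F) _ (X i'))) * (f - s f)

/-- `w₀ H_i w₀ = (H_{n-i}°)⁻¹` for `1 ≤ i < n` (here written with the 0-based
index `i` running over `i + 1 < n`, so the 1-based index is `i+1` and
`n - (i+1)` corresponds to the 0-based pair `(n-2-i, n-1-i)`); `w₀` is the
field homomorphism reversing the variables, and by the quadratic relation
`(H_j°)⁻¹ = t(H_j° + 1 - t⁻¹)`, so the claim reads
`w₀(H_i(w₀ f)) = t·(H_{n-i}° f + f - t⁻¹ f)` for all `f`. -/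
theorem stmt10 {F : Type} [Field F] {n : ℕ} (t : F) (ht : t ≠ 0)
    (i : ℕ) (hi : i + 1 < n)
    (s s' W : FractionRing (MvPolynomial (Fin n) F) →+*
              FractionRing (MvPolynomial (Fin n) F))
    (hs : ∀ p : MvPolynomial (Fin n) F,
      s (algebraMap (MvPolynomial (Fin n) F)
          (FractionRing (MvPolynomial (Fin n) F)) p)
        = algebraMap (MvPolynomial (Fin n) F)
            (FractionRing (MvPolynomial (Fin n) F))
            (rename (fun k =>
              Equiv.swap ⟨i, Nat.lt_of_succ_lt hi⟩ ⟨i + 1, hi⟩ k) p))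
    (hs' : ∀ p : MvPolynomial (Fin n) F,
      s' (algebraMap (MvPolynomial (Fin n) F)
          (FractionRing (MvPolynomial (Fin n) F)) p)
        = algebraMap (MvPolynomial (Fin n) F)
            (FractionRing (MvPolynomial (Fin n) F))
            (rename (fun k =>
              Equiv.swap ⟨n - 2 - i, by omega⟩ ⟨n - 1 - i, by omega⟩ k) p))
    (hWC : ∀ a : F,
      W (algebraMap (MvPolynomial (Fin n) F)
          (FractionRing (MvPolynomial (Fin n) F)) (C a))
        = algebraMap (MvPolynomial (Fin n) F)
            (FractionRing (MvPolynomial (Fin n) F)) (C a))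
    (hWX : ∀ j : Fin n,
      W (algebraMap (MvPolynomial (Fin n) F)
          (FractionRing (MvPolynomial (Fin n) F)) (X j))
        = algebraMap (MvPolynomial (Fin n) F)
            (FractionRing (MvPolynomial (Fin n) F))
            (X (⟨n - 1 - (j : ℕ), by have := j.isLt; omega⟩ : Fin n)))
    (f : FractionRing (MvPolynomial (Fin n) F)) :
    W (DLop t ⟨i, Nat.lt_of_succ_lt hi⟩ ⟨i + 1, hi⟩ s (W f))
      = algebraMap (MvPolynomial (Fin n) F) _ (C t) *
          (DLop t⁻¹ ⟨n - 2 - i, by omega⟩ ⟨n - 1 - i, by omega⟩ s' f + f -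
            (algebraMap (MvPolynomial (Fin n) F) _ (C t))⁻¹ * f) := by

  set R := MvPolynomial (Fin n) F with hR
  set K := FractionRing R with hK
  let ι : R →+* K := algebraMap R K
  let rev : Fin n → Fin n := fun j => ⟨n - 1 - (j : ℕ), by have := j.isLt; omega⟩
  have hι : Function.Injective ι := IsFractionRing.injective R K
  -- W on polynomial images
  have keyW : ∀ p : R, W (ι p) = ι (rename rev p) := by
    have : W.comp ι = ι.comp (rename rev).toRingHom := by
      apply MvPolynomial.ringHom_ext
      · intro a
        simp only [RingHom.comp_apply, AlgHom.toRingHom_eq_coe, RingHom.coe_coe, rename_C]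
        exact hWC a
      · intro j
        simp only [RingHom.comp_apply, AlgHom.toRingHom_eq_coe, RingHom.coe_coe, rename_X]
        exact hWX j
    exact fun p => RingHom.congr_fun this p
  have hrevrev : (rev ∘ rev) = id := by
    funext k
    have := k.isLt
    simp only [Function.comp, rev, id]
    ext
    simp only []
    omega
  -- W ∘ W = id
  have hWW : ∀ x : K, W (W x) = x := by
    have : W.comp W = RingHom.id K := by
      apply IsLocalization.ringHom_ext (nonZeroDivisors R)
      refine RingHom.ext fun p => ?_
      simp only [RingHom.comp_apply, RingHom.id_apply]
      rw [keyW, keyW, rename_rename, hrevrev, rename_id]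
      rfl
    exact fun x => RingHom.congr_fun this x
  -- conjugating the swap by rev
  have hfun : ((rev ∘ (fun k => Equiv.swap (⟨i, Nat.lt_of_succ_lt hi⟩ : Fin n) ⟨i + 1, hi⟩ k)) ∘ rev)
      = (fun k => Equiv.swap (⟨n - 2 - i, by omega⟩ : Fin n) ⟨n - 1 - i, by omega⟩ k) := by
    funext k
    have hk := k.isLt
    simp only [Function.comp, rev, Equiv.swap_apply_def, Fin.ext_iff]
    split_ifs <;> simp_all [Fin.ext_iff] <;> omega
  -- W ∘ s ∘ W = s'
  have hWsW : ∀ x : K, W (s (W x)) = s' x := by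
    have : (W.comp s).comp W = s' := by
      apply IsLocalization.ringHom_ext (nonZeroDivisors R)
      refine RingHom.ext fun p => ?_
      simp only [RingHom.comp_apply]
      rw [keyW, hs, keyW, rename_rename, rename_rename, hfun, hs' p]
    exact fun x => RingHom.congr_fun this x
  -- image of the variables under W
  have hX1 : W (ι (X (⟨i, Nat.lt_of_succ_lt hi⟩ : Fin n))) = ι (X (⟨n - 1 - i, by omega⟩ : Fin n)) := by
    rw [hWX]
  have hX2 : W (ι (X (⟨i + 1, hi⟩ : Fin n))) = ι (X (⟨n - 2 - i, by omega⟩ : Fin n)) := by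
    rw [hWX]
    exact congrArg ι (congrArg X (Fin.ext (by simp only [Fin.val_mk]; omega)))
  -- nonvanishing facts
  have hT : ι (C t) ≠ 0 := by
    intro h
    apply ht
    have h1 : (C t : R) = 0 := hι (by simpa using h)
    have := MvPolynomial.C_injective (Fin n) F (by simpa using h1 : C t = C (0 : F))
    simpa using this
  have hT' : ι (C (t⁻¹)) = (ι (C t))⁻¹ := map_inv₀ (ι.comp C) t
  have hXne : ∀ (a b : Fin n), a ≠ b → ι (X a) - ι (X b) ≠ 0 := by
    intro a b hab h
    exact hab (MvPolynomial.X_injective (hι (sub_eq_zero.mp h)))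
  have huv : ι (X (⟨n - 2 - i, by omega⟩ : Fin n)) - ι (X (⟨n - 1 - i, by omega⟩ : Fin n)) ≠ 0 := by
    apply hXne
    simp only [ne_eq, Fin.mk.injEq]
    omega
  have hvu : ι (X (⟨n - 1 - i, by omega⟩ : Fin n)) - ι (X (⟨n - 2 - i, by omega⟩ : Fin n)) ≠ 0 := by
    apply hXne
    simp only [ne_eq, Fin.mk.injEq]
    omega
  -- unfold and compute
  simp only [DLop]
  simp only [map_sub, map_mul, map_div₀, map_one]
  rw [hWC, hX1, hX2, hWW, hWsW, hT']
  set T := ι (C t)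
  set u := ι (X (⟨n - 2 - i, by omega⟩ : Fin n))
  set v := ι (X (⟨n - 1 - i, by omega⟩ : Fin n))
  field_simp
  ring
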